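/- arXiv:1309.0893 — 2 statements merged into one kernel-verified Lean document; each statement's English description precedes it below -/
import Mathlib

section
/- Let Y be a set, let σ : X → P(Y*) be any assignment of languages to variables, and let σ̂ : T X → P(Y*) be the structurally induced language interpretation (σ̂ is a homomorphism for the semiring operations on languages and σ̂(μx.t) = ⋃_{n≥0} σ̂(nx.t)). Then for every μ-expression t and variable x, σ̂(μx.t) is the least language A ⊆ Y* such that σ̂[x↦A](t) ⊆ A; that is, σ̂[x↦σ̂(μx.t)](t) = σ̂(μx.t), and for every language A with σ̂[x↦A](t) ⊆ A one has σ̂(μx.t) ⊆ A. -/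
/-- μ-expressions over a set `X` of variables:
`t ::= x | t + t | t·t | 0 | 1 | μx.t`. -/
inductive MuTerm (X : Type) : Type
  | var : X → MuTerm X
  | zero : MuTerm X
  | one : MuTerm X
  | add : MuTerm X → MuTerm X → MuTerm X
  | mul : MuTerm X → MuTerm X → MuTerm X
  | mu : X → MuTerm X → MuTerm X

namespace MuTerm

variable {X : Type}

/-- Size of a term (used for termination of substitution). -/
def size : MuTerm X → ℕ
  | var _ => 1
  | zero => 1
  | one => 1
  | add s t => size s + size t + 1
  | mul s t => size s + size t + 1
  | mu _ t => size t + 1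

variable [DecidableEq X]

/-- Free variables of a μ-expression. -/
def fv : MuTerm X → Finset X
  | var x => {x}
  | zero => ∅
  | one => ∅
  | add s t => fv s ∪ fv t
  | mul s t => fv s ∪ fv t
  | mu x t => fv t \ {x}

/-- All (free and bound) variables of a μ-expression. -/
def vars : MuTerm X → Finset X
  | var x => {x}
  | zero => ∅
  | one => ∅
  | add s t => vars s ∪ vars t
  | mul s t => vars s ∪ vars t
  | mu x t => insert x (vars t)

/-- Rename free occurrences of the variable `y` to `z`. -/
def rename (y z : X) : MuTerm X → MuTerm X
  | var x => if x = y then var z else var x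
  | zero => zero
  | one => one
  | add s t => add (rename y z s) (rename y z t)
  | mul s t => mul (rename y z s) (rename y z t)
  | mu x t => if x = y then mu x t else mu x (rename y z t)

theorem size_rename (y z : X) : ∀ t : MuTerm X, (rename y z t).size = t.size
  | var x => by simp only [rename]; split <;> rfl
  | zero => rfl
  | one => rfl
  | add s t => by simp [rename, size, size_rename y z s, size_rename y z t]
  | mul s t => by simp [rename, size, size_rename y z s, size_rename y z t]
  | mu x t => by
      simp only [rename]; split
      · rfl
      · simp [size, size_rename y z t]

variable [Infinite X]

/-- Capture-avoiding substitution `t[x := u]`: substitute `u` for the free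
occurrences of `x` in the last argument, renaming bound variables to fresh
ones to avoid capture. -/
noncomputable def subst (x : X) (u : MuTerm X) : MuTerm X → MuTerm X
  | var y => if y = x then u else var y
  | zero => zero
  | one => one
  | add s t => add (subst x u s) (subst x u t)
  | mul s t => mul (subst x u s) (subst x u t)
  | mu y t =>
    if y = x then mu y t
    else
      let z : X := Classical.choose (Infinite.exists_notMem_finset (vars t ∪ fv u ∪ {x}))
      mu z (subst x u (rename y z t))
  termination_by t => size t
  decreasing_by
    all_goals simp only [size, size_rename]
    all_goals omega

/-- The `n`-th approximant `nx.t`: `0x.t = 0`, `(n+1)x.t = t[x := nx.t]`. -/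
noncomputable def napprox : ℕ → X → MuTerm X → MuTerm X
  | 0, _, _ => zero
  | n + 1, x, t => subst x (napprox n x t) t

end MuTerm

/-- Polynomial functions over a semiring `C` in `n` indeterminates: functions
built from constants in `C`, projections, addition, and multiplication. -/
inductive IsPolyFun {C : Type} [Semiring C] : {n : ℕ} → ((Fin n → C) → C) → Prop
  | const {n : ℕ} (c : C) : IsPolyFun fun _ : Fin n → C => c
  | proj {n : ℕ} (i : Fin n) : IsPolyFun fun v => v i
  | add {n : ℕ} {p q : (Fin n → C) → C} :
      IsPolyFun p → IsPolyFun q → IsPolyFun fun v => p v + q v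
  | mul {n : ℕ} {p q : (Fin n → C) → C} :
      IsPolyFun p → IsPolyFun q → IsPolyFun fun v => p v * q v

/-- A Chomsky algebra is an idempotent semiring (ordered by `a ≤ b ↔ a + b = b`)
in which every finite system of polynomial inequalities `pᵢ ≤ xᵢ` has a least
solution. -/
class ChomskyAlgebra (C : Type) extends IdemSemiring C where
  algClosed : ∀ {n : ℕ} (p : Fin n → (Fin n → C) → C), (∀ i, IsPolyFun (p i)) →
    ∃ sol : Fin n → C, (∀ i, p i sol ≤ sol i) ∧
      ∀ τ : Fin n → C, (∀ i, p i τ ≤ τ i) → ∀ i, sol i ≤ τ i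

/-- `IsInterp eval` says that `eval` is the family of interpretations of
μ-expressions over the Chomsky algebra `C`, one for each valuation `v : X → C`:
each `eval v` is a homomorphism with respect to the semiring operations, and
`eval v (μx.t)` is the least `a` with `eval v[x↦a] t ≤ a`. -/
structure IsInterp {X C : Type} [DecidableEq X] [Infinite X] [ChomskyAlgebra C]
    (eval : (X → C) → MuTerm X → C) : Prop where
  var : ∀ (v : X → C) (x : X), eval v (.var x) = v x
  zero : ∀ v, eval v .zero = 0
  one : ∀ v, eval v .one = 1
  add : ∀ v s t, eval v (.add s t) = eval v s + eval v t
  mul : ∀ v s t, eval v (.mul s t) = eval v s * eval v t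
  mu : ∀ (v : X → C) (x : X) (t : MuTerm X),
    IsLeast {a : C | eval (Function.update v x a) t ≤ a} (eval v (.mu x t))

/-- A Chomsky algebra `C` is μ-continuous if for every interpretation `σ` over
`C`, all `c, d ∈ C`, and every term `t`,
`c·σ(μx.t)·d = sup_{n ≥ 0} c·σ(nx.t)·d` (in particular the supremum exists). -/
def MuContinuous (C : Type) [ChomskyAlgebra C] : Prop :=
  ∀ (X : Type) [DecidableEq X] [Infinite X] (eval : (X → C) → MuTerm X → C),
    IsInterp eval → ∀ (v : X → C) (c d : C) (x : X) (t : MuTerm X),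
      IsLUB (Set.range fun n : ℕ => c * eval v (MuTerm.napprox n x t) * d)
        (c * eval v (.mu x t) * d)

/-- A language interpretation `τ : T X → P(Y*)`: a homomorphism for the
semiring operations on languages with `τ(μx.t) = ⋃ n, τ(nx.t)`. -/
structure IsLangInterp {X Y : Type} [DecidableEq X] [Infinite X]
    (τ : MuTerm X → Language Y) : Prop where
  zero : τ .zero = 0
  one : τ .one = 1
  add : ∀ s t, τ (.add s t) = τ s + τ t
  mul : ∀ s t, τ (.mul s t) = τ s * τ t
  mu : ∀ (x : X) (t : MuTerm X), τ (.mu x t) = ⨆ n : ℕ, τ (MuTerm.napprox n x t)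

/-- The canonical interpretation `L_X : T X → P(X*)`: the language
interpretation with `L_X(x) = {x}`. -/
def IsCanonicalInterp {X : Type} [DecidableEq X] [Infinite X]
    (L : MuTerm X → Language X) : Prop :=
  IsLangInterp L ∧ ∀ x : X, L (.var x) = {[x]}

/-- For a word `w = x₁⋯x_k ∈ X*` and `σ : X → K`, `wordProd σ w` is the
product `σ(x₁)⋯σ(x_k)` in `K`, with the empty word mapped to `1`. -/
def wordProd {X K : Type} [Monoid K] (σ : X → K) (w : List X) : K :=
  (w.map σ).prod

/-- `IsLangEval E` says that `E` is the family of structurally induced language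
interpretations, one for each assignment `σ : X → P(Y*)` of languages to
variables: each `E σ` is a homomorphism for the semiring operations on
languages, with `E σ (μx.t) = ⋃ n, E σ (nx.t)`. -/
structure IsLangEval {X Y : Type} [DecidableEq X] [Infinite X]
    (E : (X → Language Y) → MuTerm X → Language Y) : Prop where
  var : ∀ (σ : X → Language Y) (x : X), E σ (.var x) = σ x
  zero : ∀ σ, E σ .zero = 0
  one : ∀ σ, E σ .one = 1
  add : ∀ σ s t, E σ (.add s t) = E σ s + E σ t
  mul : ∀ σ s t, E σ (.mul s t) = E σ s * E σ t
  mu : ∀ (σ : X → Language Y) (x : X) (t : MuTerm X),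
    E σ (.mu x t) = ⨆ n : ℕ, E σ (MuTerm.napprox n x t)


set_option linter.unusedSectionVars false
set_option maxHeartbeats 1000000

namespace MuTerm
variable {X : Type} [DecidableEq X] [Infinite X]

lemma subst_var (x : X) (u : MuTerm X) (y : X) :
    subst x u (var y) = if y = x then u else var y := by rw [subst]

@[simp] lemma subst_zero (x : X) (u : MuTerm X) : subst x u (zero : MuTerm X) = zero := by
  rw [subst]
@[simp] lemma subst_one (x : X) (u : MuTerm X) : subst x u (one : MuTerm X) = one := by
  rw [subst]
@[simp] lemma subst_add (x : X) (u s t : MuTerm X) :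
    subst x u (add s t) = add (subst x u s) (subst x u t) := by rw [subst]
@[simp] lemma subst_mul (x : X) (u s t : MuTerm X) :
    subst x u (mul s t) = mul (subst x u s) (subst x u t) := by rw [subst]

@[simp] lemma subst_mu_eq (x : X) (u : MuTerm X) (t : MuTerm X) :
    subst x u (mu x t) = mu x t := by rw [subst]; simp

lemma subst_mu_ne (x : X) (u : MuTerm X) (y : X) (t : MuTerm X) (h : y ≠ x) :
    subst x u (mu y t) =
      mu (Classical.choose (Infinite.exists_notMem_finset (vars t ∪ fv u ∪ {x})))
        (subst x u (rename y
          (Classical.choose (Infinite.exists_notMem_finset (vars t ∪ fv u ∪ {x}))) t)) := by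
  rw [subst]; simp [h]

lemma fresh_spec (x : X) (u : MuTerm X) (t : MuTerm X) :
    Classical.choose (Infinite.exists_notMem_finset (vars t ∪ fv u ∪ {x})) ∉
      vars t ∪ fv u ∪ {x} :=
  Classical.choose_spec (Infinite.exists_notMem_finset (vars t ∪ fv u ∪ {x}))

lemma fv_subset_vars : ∀ t : MuTerm X, fv t ⊆ vars t := by
  intro t; induction t with
  | var x => simp [fv, vars]
  | zero => simp [fv, vars]
  | one => simp [fv, vars]
  | add s t hs ht => simp only [fv, vars]; exact Finset.union_subset_union hs ht
  | mul s t hs ht => simp only [fv, vars]; exact Finset.union_subset_union hs ht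
  | mu x t ht =>
      simp only [fv, vars]
      intro v hv
      simp only [Finset.mem_sdiff, Finset.mem_singleton] at hv
      exact Finset.mem_insert_of_mem (ht hv.1)

lemma rename_eq_self (y z : X) : ∀ t : MuTerm X, y ∉ fv t → rename y z t = t := by
  intro t; induction t with
  | var x =>
      intro h; simp only [fv, Finset.mem_singleton] at h
      rw [rename, if_neg (fun hh => h hh.symm)]
  | zero => intro _; rfl
  | one => intro _; rfl
  | add s t hs ht => intro h; simp [fv] at h; simp [rename, hs h.1, ht h.2]
  | mul s t hs ht => intro h; simp [fv] at h; simp [rename, hs h.1, ht h.2]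
  | mu x t ht =>
      intro h
      by_cases hxy : x = y
      · simp [rename, hxy]
      · have : y ∉ fv t := by
          intro hy; apply h; simp [fv, Finset.mem_sdiff]
          exact ⟨hy, fun hh => hxy hh.symm⟩
        simp [rename, hxy, ht this]

lemma ite_rename_union {X : Type} [DecidableEq X] {A B : Finset X} {y z : X}
    (hzA : z ∉ A) (hzB : z ∉ B) :
    ((if y ∈ A then insert z (A \ {y}) else A) ∪ (if y ∈ B then insert z (B \ {y}) else B))
      = if y ∈ A ∪ B then insert z ((A ∪ B) \ {y}) else A ∪ B := by
  by_cases h1 : y ∈ A <;> by_cases h2 : y ∈ B <;>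
    simp only [h1, h2, if_pos, if_neg, Finset.mem_union, true_or, or_true, if_true,
      not_false_eq_true, false_or, or_self, if_false] <;>
    ext w <;> by_cases hwy : w = y <;> by_cases hwz : w = z <;>
    simp_all [Finset.mem_union, Finset.mem_insert, Finset.mem_sdiff, Finset.mem_singleton]

lemma fv_rename_lower (y z : X) : ∀ t : MuTerm X, fv t \ {y} ⊆ fv (rename y z t) := by
  intro t; induction t with
  | var x =>
      intro v hv
      simp only [fv, Finset.mem_sdiff, Finset.mem_singleton] at hv
      obtain ⟨rfl, h2⟩ := hv
      simp [rename, h2, fv]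
  | zero => simp [fv, rename]
  | one => simp [fv, rename]
  | add s t hs ht =>
      intro v hv; simp only [fv, rename, Finset.mem_sdiff, Finset.mem_union] at hv ⊢
      rcases hv with ⟨h1 | h1, h2⟩
      · exact Or.inl (hs (by simp [Finset.mem_sdiff]; exact ⟨h1, by simpa using h2⟩))
      · exact Or.inr (ht (by simp [Finset.mem_sdiff]; exact ⟨h1, by simpa using h2⟩))
  | mul s t hs ht =>
      intro v hv; simp only [fv, rename, Finset.mem_sdiff, Finset.mem_union] at hv ⊢
      rcases hv with ⟨h1 | h1, h2⟩
      · exact Or.inl (hs (by simp [Finset.mem_sdiff]; exact ⟨h1, by simpa using h2⟩))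
      · exact Or.inr (ht (by simp [Finset.mem_sdiff]; exact ⟨h1, by simpa using h2⟩))
  | mu x t ht =>
      by_cases hxy : x = y
      · subst hxy
        intro v hv
        simp only [rename, if_pos rfl, ↓reduceIte]
        simp only [fv, Finset.mem_sdiff, Finset.mem_singleton] at hv ⊢
        exact hv.1
      · intro v hv
        simp only [fv, Finset.mem_sdiff, Finset.mem_singleton] at hv
        obtain ⟨⟨h1, h2⟩, h3⟩ := hv
        simp only [rename, if_neg hxy, fv, Finset.mem_sdiff, Finset.mem_singleton]
        refine ⟨ht ?_, h2⟩
        simp [Finset.mem_sdiff]; exact ⟨h1, h3⟩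

lemma fv_rename (y z : X) : ∀ t : MuTerm X, z ∉ vars t →
    fv (rename y z t) = if y ∈ fv t then insert z (fv t \ {y}) else fv t := by
  intro t; induction t with
  | var x =>
      intro _; by_cases h : x = y
      · subst h; simp [rename, fv]
      · have hy : y ∉ fv (var x) := by
          simp only [fv, Finset.mem_singleton]; exact fun hh => h hh.symm
        rw [rename, if_neg h, if_neg hy]
  | zero => intro _; simp [rename, fv]
  | one => intro _; simp [rename, fv]
  | add s t hs ht =>
      intro hz
      simp only [vars, Finset.mem_union, not_or] at hz
      have hzs : z ∉ fv s := fun h => hz.1 (fv_subset_vars s h)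
      have hzt : z ∉ fv t := fun h => hz.2 (fv_subset_vars t h)
      simp only [rename, fv, hs hz.1, ht hz.2]
      exact ite_rename_union hzs hzt
  | mul s t hs ht =>
      intro hz
      simp only [vars, Finset.mem_union, not_or] at hz
      have hzs : z ∉ fv s := fun h => hz.1 (fv_subset_vars s h)
      have hzt : z ∉ fv t := fun h => hz.2 (fv_subset_vars t h)
      simp only [rename, fv, hs hz.1, ht hz.2]
      exact ite_rename_union hzs hzt
  | mu x t ht =>
      intro hz
      simp only [vars, Finset.mem_insert, not_or] at hz
      obtain ⟨hzx, hzt⟩ := hz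
      by_cases hxy : x = y
      · subst hxy
        have hy : x ∉ fv (mu x t) := by simp [fv]
        rw [rename, if_pos rfl, if_neg hy]
      · simp only [rename, if_neg hxy, fv, ht hzt]
        by_cases hyt : y ∈ fv t
        · have hym : y ∈ fv t \ {x} ∨ y = x := by
            by_cases h : y = x
            · exact Or.inr h
            · exact Or.inl (by simp [Finset.mem_sdiff]; exact ⟨hyt, h⟩)
          rcases hym with hym | hym
          · rw [if_pos hyt]; simp only [hym, ↓reduceIte]
            ext w
            simp only [Finset.mem_insert, Finset.mem_sdiff, Finset.mem_singleton]
            constructor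
            · rintro ⟨(rfl | ⟨h1, h2⟩), h3⟩
              · exact Or.inl rfl
              · exact Or.inr ⟨⟨h1, h3⟩, h2⟩
            · rintro (rfl | ⟨⟨h1, h2⟩, h3⟩)
              · exact ⟨Or.inl rfl, hzx⟩
              · exact ⟨Or.inr ⟨h1, h3⟩, h2⟩
          · exact absurd hym (fun h => hxy h.symm)
        · have h1 : y ∉ fv t \ {x} := fun h => hyt (Finset.mem_sdiff.mp h).1
          rw [if_neg hyt]; simp only [h1, ↓reduceIte]

lemma mem_fv_rename_iff {y z : X} {t : MuTerm X} (hz : z ∉ vars t) {x : X}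
    (hxy : x ≠ y) (hxz : x ≠ z) : x ∈ fv (rename y z t) ↔ x ∈ fv t := by
  rw [fv_rename y z t hz]
  by_cases h : y ∈ fv t
  · rw [if_pos h]
    simp [Finset.mem_insert, Finset.mem_sdiff, hxy, hxz]
  · rw [if_neg h]

lemma fv_subst (x : X) (u : MuTerm X) : ∀ (t : MuTerm X),
    fv (subst x u t) = if x ∈ fv t then (fv t \ {x}) ∪ fv u else fv t
  | var y => by
      by_cases h : y = x
      · subst h
        rw [subst_var, if_pos rfl, if_pos (by simp [fv])]
        simp [fv]
      · rw [subst_var, if_neg h, if_neg (by simp [fv]; exact fun hh => h hh.symm)]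
  | zero => by rw [subst_zero, if_neg (by simp [fv])]
  | one => by rw [subst_one, if_neg (by simp [fv])]
  | add s t => by
      have hs := fv_subst x u s; have ht := fv_subst x u t
      rw [subst_add]
      show fv (subst x u s) ∪ fv (subst x u t) = _
      rw [hs, ht]
      show _ = if x ∈ fv s ∪ fv t then (fv s ∪ fv t) \ {x} ∪ fv u else fv s ∪ fv t
      by_cases h1 : x ∈ fv s <;> by_cases h2 : x ∈ fv t
      · rw [if_pos h1, if_pos h2, if_pos (Finset.mem_union.mpr (Or.inl h1))]
        ext w; by_cases hw : w = x <;>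
          simp_all [Finset.mem_union, Finset.mem_sdiff, Finset.mem_singleton] <;> tauto
      · rw [if_pos h1, if_neg h2, if_pos (Finset.mem_union.mpr (Or.inl h1))]
        ext w; by_cases hw : w = x <;>
          simp_all [Finset.mem_union, Finset.mem_sdiff, Finset.mem_singleton] <;> tauto
      · rw [if_neg h1, if_pos h2, if_pos (Finset.mem_union.mpr (Or.inr h2))]
        ext w; by_cases hw : w = x <;>
          simp_all [Finset.mem_union, Finset.mem_sdiff, Finset.mem_singleton] <;> tauto
      · rw [if_neg h1, if_neg h2,
          if_neg (by simp [Finset.mem_union]; exact ⟨h1, h2⟩)]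
  | mul s t => by
      have hs := fv_subst x u s; have ht := fv_subst x u t
      rw [subst_mul]
      show fv (subst x u s) ∪ fv (subst x u t) = _
      rw [hs, ht]
      show _ = if x ∈ fv s ∪ fv t then (fv s ∪ fv t) \ {x} ∪ fv u else fv s ∪ fv t
      by_cases h1 : x ∈ fv s <;> by_cases h2 : x ∈ fv t
      · rw [if_pos h1, if_pos h2, if_pos (Finset.mem_union.mpr (Or.inl h1))]
        ext w; by_cases hw : w = x <;>
          simp_all [Finset.mem_union, Finset.mem_sdiff, Finset.mem_singleton] <;> tauto
      · rw [if_pos h1, if_neg h2, if_pos (Finset.mem_union.mpr (Or.inl h1))]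
        ext w; by_cases hw : w = x <;>
          simp_all [Finset.mem_union, Finset.mem_sdiff, Finset.mem_singleton] <;> tauto
      · rw [if_neg h1, if_pos h2, if_pos (Finset.mem_union.mpr (Or.inr h2))]
        ext w; by_cases hw : w = x <;>
          simp_all [Finset.mem_union, Finset.mem_sdiff, Finset.mem_singleton] <;> tauto
      · rw [if_neg h1, if_neg h2,
          if_neg (by simp [Finset.mem_union]; exact ⟨h1, h2⟩)]
  | mu y t => by
      by_cases hyx : y = x
      · subst hyx
        rw [subst_mu_eq, if_neg (by simp [fv])]
      · rw [subst_mu_ne x u y t hyx]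
        have hz := fresh_spec x u t
        set z := Classical.choose (Infinite.exists_notMem_finset (vars t ∪ fv u ∪ {x}))
          with hzdef
        clear_value z
        simp only [Finset.mem_union, Finset.mem_singleton, not_or] at hz
        obtain ⟨⟨hzt, hzu⟩, hzx⟩ := hz
        clear hzdef
        have hzf : z ∉ fv t := fun h => hzt (fv_subset_vars t h)
        have hrec := fv_subst x u (rename y z t)
        have hfr := fv_rename y z t hzt
        have hxy : x ≠ y := fun h => hyx h.symm
        have hmem : x ∈ fv (rename y z t) ↔ x ∈ fv t :=
          mem_fv_rename_iff hzt hxy (fun h => hzx h.symm)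
        show fv (subst x u (rename y z t)) \ {z} = _
        by_cases hxt : x ∈ fv t
        · rw [hrec, if_pos (hmem.mpr hxt)]
          have hmu : x ∈ fv (mu y t) := by
            simp only [fv, Finset.mem_sdiff, Finset.mem_singleton]; exact ⟨hxt, hxy⟩
          rw [if_pos hmu, hfr]
          show _ = (fv t \ {y}) \ {x} ∪ fv u
          by_cases hyt : y ∈ fv t
          · rw [if_pos hyt]
            ext w
            by_cases h1 : w = z <;> by_cases h2 : w = x <;> by_cases h3 : w = y <;>
              simp_all [Finset.mem_union, Finset.mem_insert, Finset.mem_sdiff,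
                Finset.mem_singleton]
          · rw [if_neg hyt]
            ext w
            by_cases h1 : w = z <;> by_cases h2 : w = x <;> by_cases h3 : w = y <;>
              simp_all [Finset.mem_union, Finset.mem_insert, Finset.mem_sdiff,
                Finset.mem_singleton]
        · rw [hrec, if_neg (fun h => hxt (hmem.mp h))]
          have hmu : x ∉ fv (mu y t) := by
            simp only [fv, Finset.mem_sdiff, Finset.mem_singleton, not_and]
            intro h _; exact hxt h
          rw [if_neg hmu, hfr]
          show _ = fv t \ {y}
          by_cases hyt : y ∈ fv t
          · rw [if_pos hyt]
            ext w
            by_cases h1 : w = z <;> by_cases h3 : w = y <;>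
              simp_all [Finset.mem_insert, Finset.mem_sdiff, Finset.mem_singleton]
          · rw [if_neg hyt]
            ext w
            by_cases h1 : w = z <;> by_cases h3 : w = y <;>
              simp_all [Finset.mem_insert, Finset.mem_sdiff, Finset.mem_singleton]
  termination_by t => size t
  decreasing_by
    all_goals simp only [size, size_rename]
    all_goals omega

lemma fv_subst_of_not_mem {x : X} {t : MuTerm X} (u : MuTerm X) (h : x ∉ fv t) :
    fv (subst x u t) = fv t := by rw [fv_subst, if_neg h]

lemma fv_subst_of_mem {x : X} {t : MuTerm X} (u : MuTerm X) (h : x ∈ fv t) :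
    fv (subst x u t) = (fv t \ {x}) ∪ fv u := by rw [fv_subst, if_pos h]

lemma fv_subst_lower (x : X) (u t : MuTerm X) : fv t \ {x} ⊆ fv (subst x u t) := by
  rw [fv_subst]; by_cases h : x ∈ fv t
  · rw [if_pos h]; exact Finset.subset_union_left
  · rw [if_neg h]; exact Finset.sdiff_subset

lemma fv_u_subset_fv_subst {x : X} {t : MuTerm X} (u : MuTerm X) (h : x ∈ fv t) :
    fv u ⊆ fv (subst x u t) := by
  rw [fv_subst_of_mem u h]; exact Finset.subset_union_right

lemma fv_napprox (x : X) (t : MuTerm X) : ∀ n, fv (napprox n x t) ⊆ fv t \ {x} := by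
  intro n; induction n with
  | zero => simp [napprox, fv]
  | succ n ih =>
      show fv (subst x (napprox n x t) t) ⊆ _
      rw [fv_subst]
      by_cases h : x ∈ fv t
      · rw [if_pos h]
        exact Finset.union_subset (Finset.Subset.refl _) ih
      · rw [if_neg h]
        intro w hw
        simp only [Finset.mem_sdiff, Finset.mem_singleton]
        exact ⟨hw, fun hh => h (hh ▸ hw)⟩

end MuTerm

namespace S3
open MuTerm

lemma lang_mul_mono {Y : Type} {a b c d : Language Y} (h1 : a ≤ b) (h2 : c ≤ d) :
    a * c ≤ b * d := mul_le_mul' h1 h2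

lemma lang_add_mono {Y : Type} {a b c d : Language Y} (h1 : a ≤ b) (h2 : c ≤ d) :
    a + c ≤ b + d := sup_le_sup h1 h2

variable {X Y : Type} [DecidableEq X] [Infinite X]

noncomputable def deval (σ : X → Language Y) : MuTerm X → Language Y
  | .var x => σ x
  | .zero => 0
  | .one => 1
  | .add s t => deval σ s + deval σ t
  | .mul s t => deval σ s * deval σ t
  | .mu x t => ⨆ n : ℕ, (fun A => deval (Function.update σ x A) t)^[n] ⊥

@[simp] lemma deval_var (σ : X → Language Y) (x : X) : deval σ (var x) = σ x := rfl
@[simp] lemma deval_zero (σ : X → Language Y) : deval σ (zero : MuTerm X) = 0 := rfl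
@[simp] lemma deval_one (σ : X → Language Y) : deval σ (one : MuTerm X) = 1 := rfl
@[simp] lemma deval_add (σ : X → Language Y) (s t : MuTerm X) :
    deval σ (add s t) = deval σ s + deval σ t := rfl
@[simp] lemma deval_mul (σ : X → Language Y) (s t : MuTerm X) :
    deval σ (mul s t) = deval σ s * deval σ t := rfl
lemma deval_mu (σ : X → Language Y) (x : X) (t : MuTerm X) :
    deval σ (mu x t) = ⨆ n : ℕ, (fun A => deval (Function.update σ x A) t)^[n] ⊥ := rfl

lemma deval_congr : ∀ (t : MuTerm X) (σ σ' : X → Language Y),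
    (∀ v ∈ fv t, σ v = σ' v) → deval σ t = deval σ' t := by
  intro t; induction t with
  | var x => intro σ σ' h; exact h x (by simp [fv])
  | zero => intro _ _ _; rfl
  | one => intro _ _ _; rfl
  | add s t hs ht =>
      intro σ σ' h
      simp only [deval_add]
      rw [hs σ σ' (fun v hv => h v (by simp [fv, hv])),
        ht σ σ' (fun v hv => h v (by simp [fv, hv]))]
  | mul s t hs ht =>
      intro σ σ' h
      simp only [deval_mul]
      rw [hs σ σ' (fun v hv => h v (by simp [fv, hv])),
        ht σ σ' (fun v hv => h v (by simp [fv, hv]))]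
  | mu x t ht =>
      intro σ σ' h
      simp only [deval_mu]
      have : (fun A => deval (Function.update σ x A) t)
          = fun A => deval (Function.update σ' x A) t := by
        funext A
        apply ht
        intro v hv
        by_cases hvx : v = x
        · subst hvx; simp
        · rw [Function.update_of_ne hvx, Function.update_of_ne hvx]
          exact h v (by simp [fv, Finset.mem_sdiff, hv, hvx])
      rw [this]

lemma deval_mono : ∀ (t : MuTerm X) (σ σ' : X → Language Y),
    (∀ v, σ v ≤ σ' v) → deval σ t ≤ deval σ' t := by
  intro t; induction t with
  | var x => intro σ σ' h; exact h x
  | zero => intro _ _ _; exact le_rfl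
  | one => intro _ _ _; exact le_rfl
  | add s t hs ht => intro σ σ' h; exact lang_add_mono (hs σ σ' h) (ht σ σ' h)
  | mul s t hs ht => intro σ σ' h; exact lang_mul_mono (hs σ σ' h) (ht σ σ' h)
  | mu x t ht =>
      intro σ σ' h
      simp only [deval_mu]
      apply iSup_mono
      intro n
      induction n with
      | zero => simp
      | succ n ih =>
          rw [Function.iterate_succ_apply', Function.iterate_succ_apply']
          apply ht
          intro v
          by_cases hvx : v = x
          · subst hvx; simp [ih]
          · rw [Function.update_of_ne hvx, Function.update_of_ne hvx]; exact h v

lemma iter_mono {F G : Language Y → Language Y}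
    (hFG : ∀ A B, A ≤ B → F A ≤ G B) : ∀ n, F^[n] ⊥ ≤ G^[n] ⊥ := by
  intro n; induction n with
  | zero => exact le_rfl
  | succ n ih =>
      rw [Function.iterate_succ_apply', Function.iterate_succ_apply']
      exact hFG _ _ ih

lemma iSup_mul_iSup_chain {S T : ℕ → Language Y} (hS : Monotone S) (hT : Monotone T) :
    (⨆ n, S n) * (⨆ n, T n) = ⨆ n, S n * T n := by
  apply le_antisymm
  · rw [Language.iSup_mul]
    apply iSup_le; intro i
    rw [Language.mul_iSup]
    apply iSup_le; intro j
    calc S i * T j ≤ S (max i j) * T (max i j) :=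
          mul_le_mul' (hS (le_max_left i j)) (hT (le_max_right i j))
      _ ≤ ⨆ n, S n * T n := le_iSup (fun n => S n * T n) (max i j)
  · apply iSup_le; intro n
    exact mul_le_mul' (le_iSup S n) (le_iSup T n)

lemma deval_iSup_chain : ∀ (t : MuTerm X) (σ : ℕ → X → Language Y),
    (∀ i j, i ≤ j → ∀ v, σ i v ≤ σ j v) →
    deval (fun v => ⨆ n, σ n v) t = ⨆ n, deval (σ n) t := by
  intro t; induction t with
  | var x => intro σ h; rfl
  | zero => intro σ h; simp
  | one => intro σ h; simp
  | add s t hs ht =>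
      intro σ h
      simp only [deval_add, hs σ h, ht σ h]
      show _ = ⨆ n, deval (σ n) s ⊔ deval (σ n) t
      show (⨆ n, deval (σ n) s) ⊔ (⨆ n, deval (σ n) t) = _
      exact iSup_sup_eq.symm
  | mul s t hs ht =>
      intro σ h
      simp only [deval_mul, hs σ h, ht σ h]
      exact iSup_mul_iSup_chain
        (fun i j hij => deval_mono s _ _ (h i j hij))
        (fun i j hij => deval_mono t _ _ (h i j hij))
  | mu x t ht =>
      intro σ h
      simp only [deval_mu]
      have hiter : ∀ (i j : ℕ), i ≤ j → ∀ n,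
          (fun A => deval (Function.update (σ i) x A) t)^[n] ⊥ ≤
          (fun A => deval (Function.update (σ j) x A) t)^[n] ⊥ := by
        intro i j hij
        apply iter_mono
        intro A B hAB
        apply deval_mono
        intro v
        by_cases hvx : v = x
        · subst hvx; simp [hAB]
        · rw [Function.update_of_ne hvx, Function.update_of_ne hvx]; exact h i j hij v
      have key : ∀ n, (fun A => deval (Function.update (fun v => ⨆ m, σ m v) x A) t)^[n] ⊥
          = ⨆ m, (fun A => deval (Function.update (σ m) x A) t)^[n] ⊥ := by
        intro n; induction n with
        | zero => simp
        | succ n ih =>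
            rw [Function.iterate_succ_apply', ih]
            have hupd : Function.update (fun v => ⨆ m, σ m v) x
                  (⨆ m, (fun A => deval (Function.update (σ m) x A) t)^[n] ⊥)
                = fun v => ⨆ m,
                    (Function.update (σ m) x
                      ((fun A => deval (Function.update (σ m) x A) t)^[n] ⊥)) v := by
              funext v
              by_cases hvx : v = x
              · subst hvx; simp
              · simp only [Function.update_of_ne hvx]
            show deval (Function.update (fun v => ⨆ m, σ m v) x
              (⨆ m, (fun A => deval (Function.update (σ m) x A) t)^[n] ⊥)) t = _
            rw [hupd, ht _ (fun i j hij v => by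
              by_cases hvx : v = x
              · subst hvx; simp only [Function.update_self]; exact hiter i j hij n
              · simp only [Function.update_of_ne hvx]; exact h i j hij v)]
            apply iSup_congr
            intro m
            rw [Function.iterate_succ_apply']
      calc (⨆ n, (fun A => deval (Function.update (fun v => ⨆ m, σ m v) x A) t)^[n] ⊥)
          = ⨆ n, ⨆ m, (fun A => deval (Function.update (σ m) x A) t)^[n] ⊥ := by
            apply iSup_congr; intro n; exact key n
        _ = ⨆ m, ⨆ n, (fun A => deval (Function.update (σ m) x A) t)^[n] ⊥ := iSup_comm

lemma deval_rename : ∀ (t : MuTerm X) (y z : X), z ∉ vars t → ∀ (σ : X → Language Y),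
    deval σ (rename y z t) = deval (Function.update σ y (σ z)) t := by
  intro t; induction t with
  | var w =>
      intro y z hz σ
      by_cases h : w = y
      · subst h; rw [rename, if_pos rfl]; simp
      · rw [rename, if_neg h]; simp [Function.update_of_ne h]
  | zero => intro _ _ _ _; rfl
  | one => intro _ _ _ _; rfl
  | add s t hs ht =>
      intro y z hz σ
      simp only [vars, Finset.mem_union, not_or] at hz
      show deval σ (add (rename y z s) (rename y z t)) = _
      simp only [deval_add, hs y z hz.1, ht y z hz.2]
  | mul s t hs ht =>
      intro y z hz σ
      simp only [vars, Finset.mem_union, not_or] at hz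
      show deval σ (mul (rename y z s) (rename y z t)) = _
      simp only [deval_mul, hs y z hz.1, ht y z hz.2]
  | mu w t ht =>
      intro y z hz σ
      simp only [vars, Finset.mem_insert, not_or] at hz
      obtain ⟨hzw, hzt⟩ := hz
      by_cases h : w = y
      · subst h
        rw [rename, if_pos rfl]
        apply deval_congr
        intro v hv
        simp only [fv, Finset.mem_sdiff, Finset.mem_singleton] at hv
        rw [Function.update_of_ne hv.2]
      · rw [rename, if_neg h]
        simp only [deval_mu]
        apply iSup_congr
        intro n
        have : (fun A => deval (Function.update σ w A) (rename y z t))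
            = fun A => deval (Function.update (Function.update σ y (σ z)) w A) t := by
          funext A
          rw [ht y z hzt (Function.update σ w A)]
          have h1 : Function.update σ w A z = σ z :=
            Function.update_of_ne (fun hh : z = w => hzw hh) _ _
          rw [h1]
          rw [Function.update_comm (fun hh => h hh.symm)]
        rw [this]

lemma deval_subst : ∀ (t : MuTerm X) (x : X) (u : MuTerm X) (σ : X → Language Y),
    deval σ (subst x u t) = deval (Function.update σ x (deval σ u)) t
  | var y => by
      intro x u σ
      by_cases h : y = x
      · subst h; rw [subst_var, if_pos rfl]; simp
      · rw [subst_var, if_neg h]; simp [Function.update_of_ne h]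
  | zero => by intro x u σ; rw [subst_zero, deval_zero, deval_zero]
  | one => by intro x u σ; rw [subst_one, deval_one, deval_one]
  | add s t => by
      intro x u σ
      rw [subst_add]
      simp only [deval_add, deval_subst s x u σ, deval_subst t x u σ]
  | mul s t => by
      intro x u σ
      rw [subst_mul]
      simp only [deval_mul, deval_subst s x u σ, deval_subst t x u σ]
  | mu y t => by
      intro x u σ
      by_cases hyx : y = x
      · subst hyx
        rw [subst_mu_eq]
        apply deval_congr
        intro v hv
        simp only [fv, Finset.mem_sdiff, Finset.mem_singleton] at hv
        rw [Function.update_of_ne hv.2]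
      · rw [subst_mu_ne x u y t hyx]
        have hz := fresh_spec x u t
        set z := Classical.choose (Infinite.exists_notMem_finset (vars t ∪ fv u ∪ {x}))
          with hzdef
        clear_value z
        simp only [Finset.mem_union, Finset.mem_singleton, not_or] at hz
        obtain ⟨⟨hzt, hzu⟩, hzx⟩ := hz
        clear hzdef
        have hzf : z ∉ fv t := fun h => hzt (fv_subset_vars t h)
        simp only [deval_mu]
        apply iSup_congr
        intro n
        have : (fun A => deval (Function.update σ z A) (subst x u (rename y z t)))
            = fun A => deval (Function.update (Function.update σ x (deval σ u)) y A) t := by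
          funext A
          rw [deval_subst (rename y z t) x u (Function.update σ z A)]
          have hcu : deval (Function.update σ z A) u = deval σ u := by
            apply deval_congr
            intro v hv
            rw [Function.update_of_ne (fun hh : v = z => hzu (hh ▸ hv))]
          rw [hcu]
          rw [deval_rename t y z hzt]
          have hρz : (Function.update (Function.update σ z A) x (deval σ u)) z = A := by
            rw [Function.update_of_ne (fun hh : z = x => hzx hh), Function.update_self]
          rw [hρz]
          apply deval_congr
          intro v hv
          by_cases hvy : v = y
          · subst hvy; simp
          · rw [Function.update_of_ne hvy, Function.update_of_ne hvy]
            by_cases hvx : v = x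
            · subst hvx; simp
            · rw [Function.update_of_ne hvx, Function.update_of_ne hvx]
              rw [Function.update_of_ne (fun hh : v = z => hzf (hh ▸ hv))]
        rw [this]
  termination_by t => size t
  decreasing_by
    all_goals simp only [size, size_rename]
    all_goals omega

lemma deval_napprox (x : X) (t : MuTerm X) (σ : X → Language Y) :
    ∀ n, deval σ (napprox n x t) = (fun A => deval (Function.update σ x A) t)^[n] ⊥ := by
  intro n; induction n with
  | zero => rfl
  | succ n ih =>
      show deval σ (subst x (napprox n x t) t) = _
      rw [deval_subst t x (napprox n x t) σ, ih, Function.iterate_succ_apply']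

lemma deval_mu_napprox (σ : X → Language Y) (x : X) (t : MuTerm X) :
    deval σ (mu x t) = ⨆ n, deval σ (napprox n x t) := by
  rw [deval_mu]
  exact (iSup_congr (deval_napprox x t σ)).symm

inductive Op (X : Type) where
  | ren : X → X → Op X
  | sub : X → MuTerm X → Op X

def opsrc : Op X → X
  | .ren y _ => y
  | .sub x _ => x

noncomputable def app1 : Op X → MuTerm X → MuTerm X
  | .ren y z, t => rename y z t
  | .sub x u, t => subst x u t

noncomputable def applyL : List (Op X) → MuTerm X → MuTerm X
  | [], t => t
  | op :: l, t => applyL l (app1 op t)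

def DeadFor (l : List (Op X)) (S : Finset X) : Prop := ∀ op ∈ l, opsrc op ∉ S

noncomputable def envD (σ : X → Language Y) : List (Op X) → X → Language Y
  | [] => σ
  | .ren y z :: l => Function.update (envD σ l) y (envD σ l z)
  | .sub x u :: l => Function.update (envD σ l) x (deval (envD σ l) u)

def WF (P : MuTerm X → Prop) : MuTerm X → List (Op X) → Prop
  | _, [] => True
  | b, .ren y z :: l => (y ∈ fv b → z ∉ vars b) ∧ WF P (rename y z b) l
  | b, .sub x u :: l => (x ∈ fv b → P u ∧ DeadFor l (fv u)) ∧ WF P (subst x u b) l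

@[simp] lemma applyL_nil (t : MuTerm X) : applyL ([] : List (Op X)) t = t := rfl
@[simp] lemma applyL_cons (op : Op X) (l : List (Op X)) (t : MuTerm X) :
    applyL (op :: l) t = applyL l (app1 op t) := rfl

lemma applyL_append (l₁ l₂ : List (Op X)) (t : MuTerm X) :
    applyL (l₁ ++ l₂) t = applyL l₂ (applyL l₁ t) := by
  induction l₁ generalizing t with
  | nil => rfl
  | cons op l₁ ih => simp only [List.cons_append, applyL_cons, ih]

@[simp] lemma app1_zero (op : Op X) : app1 op (zero : MuTerm X) = zero := by
  cases op <;> simp [app1, rename]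
@[simp] lemma app1_one (op : Op X) : app1 op (one : MuTerm X) = one := by
  cases op <;> simp [app1, rename]
lemma app1_add (op : Op X) (s t : MuTerm X) :
    app1 op (add s t) = add (app1 op s) (app1 op t) := by
  cases op <;> simp [app1, rename]
lemma app1_mul (op : Op X) (s t : MuTerm X) :
    app1 op (mul s t) = mul (app1 op s) (app1 op t) := by
  cases op <;> simp [app1, rename]

@[simp] lemma applyL_zero (l : List (Op X)) : applyL l (zero : MuTerm X) = zero := by
  induction l with
  | nil => rfl
  | cons op l ih => simp [ih]

@[simp] lemma applyL_one (l : List (Op X)) : applyL l (one : MuTerm X) = one := by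
  induction l with
  | nil => rfl
  | cons op l ih => simp [ih]

lemma applyL_add (l : List (Op X)) (s t : MuTerm X) :
    applyL l (add s t) = add (applyL l s) (applyL l t) := by
  induction l generalizing s t with
  | nil => rfl
  | cons op l ih => simp only [applyL_cons, app1_add, ih]

lemma applyL_mul (l : List (Op X)) (s t : MuTerm X) :
    applyL l (mul s t) = mul (applyL l s) (applyL l t) := by
  induction l generalizing s t with
  | nil => rfl
  | cons op l ih => simp only [applyL_cons, app1_mul, ih]

lemma DeadFor.tail {op : Op X} {l : List (Op X)} {S : Finset X}
    (h : DeadFor (op :: l) S) : DeadFor l S := fun o ho => h o (List.mem_cons_of_mem _ ho)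

lemma DeadFor.head {op : Op X} {l : List (Op X)} {S : Finset X}
    (h : DeadFor (op :: l) S) : opsrc op ∉ S := h op (List.mem_cons_self)

lemma DeadFor.mono {l : List (Op X)} {S S' : Finset X} (hss : S' ⊆ S)
    (h : DeadFor l S) : DeadFor l S' := fun o ho hmem => h o ho (hss hmem)

lemma DeadFor.append_left {l₁ l₂ : List (Op X)} {S : Finset X}
    (h : DeadFor (l₁ ++ l₂) S) : DeadFor l₁ S := fun o ho => h o (by simp [ho])

lemma DeadFor.append_right {l₁ l₂ : List (Op X)} {S : Finset X}
    (h : DeadFor (l₁ ++ l₂) S) : DeadFor l₂ S := fun o ho => h o (by simp [ho])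

lemma DeadFor.append {l₁ l₂ : List (Op X)} {S : Finset X}
    (h1 : DeadFor l₁ S) (h2 : DeadFor l₂ S) : DeadFor (l₁ ++ l₂) S := by
  intro o ho
  rcases List.mem_append.mp ho with ho | ho
  · exact h1 o ho
  · exact h2 o ho

lemma fv_app1_dead {op : Op X} {c : MuTerm X} (h : opsrc op ∉ fv c) :
    fv (app1 op c) = fv c := by
  cases op with
  | ren y z => show fv (rename y z c) = fv c; rw [rename_eq_self y z c h]
  | sub x u => exact fv_subst_of_not_mem u h

lemma fv_persist {S : Finset X} : ∀ (l : List (Op X)) (c : MuTerm X),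
    S ⊆ fv c → DeadFor l S → S ⊆ fv (applyL l c) := by
  intro l
  induction l with
  | nil => intro c h _; exact h
  | cons op l ih =>
      intro c h hd
      simp only [applyL_cons]
      apply ih _ _ hd.tail
      have hop := hd.head
      cases op with
      | ren y z =>
          intro v hv
          apply fv_rename_lower y z c
          simp only [Finset.mem_sdiff, Finset.mem_singleton]
          exact ⟨h hv, fun hh => hop (show opsrc (Op.ren y z) ∈ S from hh ▸ hv)⟩
      | sub x u =>
          intro v hv
          apply fv_subst_lower x u c
          simp only [Finset.mem_sdiff, Finset.mem_singleton]
          exact ⟨h hv, fun hh => hop (show opsrc (Op.sub x u) ∈ S from hh ▸ hv)⟩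

lemma fv_applyL_dead : ∀ (l : List (Op X)) (c : MuTerm X),
    DeadFor l (fv c) → fv (applyL l c) = fv c := by
  intro l
  induction l with
  | nil => intro c _; rfl
  | cons op l ih =>
      intro c hd
      simp only [applyL_cons]
      have h1 : fv (app1 op c) = fv c := fv_app1_dead hd.head
      rw [ih (app1 op c) (by rw [h1]; exact hd.tail), h1]

lemma WF_deadtail (P : MuTerm X → Prop) : ∀ (l : List (Op X)) (c : MuTerm X),
    DeadFor l (fv c) → WF P c l := by
  intro l
  induction l with
  | nil => intro c _; trivial
  | cons op l ih =>
      intro c hd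
      have hop := hd.head
      cases op with
      | ren y z =>
          refine ⟨fun h => absurd h hop, ?_⟩
          rw [rename_eq_self y z c hop]
          exact ih c hd.tail
      | sub x u =>
          refine ⟨fun h => absurd h hop, ?_⟩
          have : fv (subst x u c) = fv c := fv_subst_of_not_mem u hop
          apply ih
          rw [this]
          exact hd.tail

lemma WF_prefix (P : MuTerm X → Prop) : ∀ (l₁ l₂ : List (Op X)) (b : MuTerm X),
    WF P b (l₁ ++ l₂) → WF P b l₁ := by
  intro l₁
  induction l₁ with
  | nil => intro l₂ b _; trivial
  | cons op l₁ ih =>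
      intro l₂ b h
      cases op with
      | ren y z => exact ⟨h.1, ih l₂ _ h.2⟩
      | sub x u =>
          refine ⟨fun hm => ⟨(h.1 hm).1, (h.1 hm).2.append_left⟩, ih l₂ _ h.2⟩

@[simp] lemma envD_nil (σ : X → Language Y) : envD σ ([] : List (Op X)) = σ := rfl
lemma envD_ren (σ : X → Language Y) (y z : X) (l : List (Op X)) :
    envD σ (Op.ren y z :: l) = Function.update (envD σ l) y (envD σ l z) := rfl
lemma envD_sub (σ : X → Language Y) (x : X) (u : MuTerm X) (l : List (Op X)) :
    envD σ (Op.sub x u :: l) = Function.update (envD σ l) x (deval (envD σ l) u) := rfl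

lemma envD_append (σ : X → Language Y) : ∀ (l₁ l₂ : List (Op X)),
    envD σ (l₁ ++ l₂) = envD (envD σ l₂) l₁ := by
  intro l₁
  induction l₁ with
  | nil => intro l₂; rfl
  | cons op l₁ ih =>
      intro l₂
      cases op with
      | ren y z => simp only [List.cons_append, envD_ren, ih]
      | sub x u => simp only [List.cons_append, envD_sub, ih]

lemma envD_untouched {v : X} (σ : X → Language Y) : ∀ (l : List (Op X)),
    (∀ op ∈ l, opsrc op ≠ v) → envD σ l v = σ v := by
  intro l
  induction l with
  | nil => intro _; rfl
  | cons op l ih =>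
      intro h
      have hop : opsrc op ≠ v := h op (List.mem_cons_self)
      have htail := ih (fun o ho => h o (List.mem_cons_of_mem _ ho))
      cases op with
      | ren y z =>
          have hyv : v ≠ y := by intro hh; exact hop (by simp [opsrc, hh])
          rw [envD_ren, Function.update_of_ne hyv, htail]
      | sub x u =>
          have hyv : v ≠ x := by intro hh; exact hop (by simp [opsrc, hh])
          rw [envD_sub, Function.update_of_ne hyv, htail]

lemma deval_applyL (P : MuTerm X → Prop) : ∀ (l : List (Op X)) (b : MuTerm X)
    (σ : X → Language Y), WF P b l → deval σ (applyL l b) = deval (envD σ l) b := by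
  intro l
  induction l with
  | nil => intro b σ _; rfl
  | cons op l ih =>
      intro b σ h
      cases op with
      | ren y z =>
          simp only [applyL_cons, envD_ren]
          show deval σ (applyL l (rename y z b)) = _
          rw [ih _ _ h.2]
          by_cases hy : y ∈ fv b
          · rw [deval_rename b y z (h.1 hy)]
          · rw [rename_eq_self y z b hy]
            apply deval_congr
            intro v hv
            rw [Function.update_of_ne (fun hh : v = y => hy (hh ▸ hv))]
      | sub x u =>
          simp only [applyL_cons, envD_sub]
          show deval σ (applyL l (subst x u b)) = _
          rw [ih _ _ h.2, deval_subst b x u (envD σ l)]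

lemma DeadFor.cons {op : Op X} {l : List (Op X)} {S : Finset X}
    (h1 : opsrc op ∉ S) (h2 : DeadFor l S) : DeadFor (op :: l) S := by
  intro o ho
  rcases List.mem_cons.mp ho with rfl | ho
  · exact h1
  · exact h2 o ho

lemma WF_add (P : MuTerm X → Prop) : ∀ (l : List (Op X)) (b₁ b₂ : MuTerm X),
    WF P (add b₁ b₂) l → WF P b₁ l ∧ WF P b₂ l := by
  intro l
  induction l with
  | nil => intro _ _ _; exact ⟨trivial, trivial⟩
  | cons op l ih =>
      intro b₁ b₂ h
      cases op with
      | ren y z =>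
          have htail : WF P (add (rename y z b₁) (rename y z b₂)) l := h.2
          obtain ⟨ih1, ih2⟩ := ih _ _ htail
          constructor
          · refine ⟨?_, ih1⟩
            intro hy hz
            exact h.1 (by simp only [fv, Finset.mem_union]; exact Or.inl hy)
              (by simp only [vars, Finset.mem_union]; exact Or.inl hz)
          · refine ⟨?_, ih2⟩
            intro hy hz
            exact h.1 (by simp only [fv, Finset.mem_union]; exact Or.inr hy)
              (by simp only [vars, Finset.mem_union]; exact Or.inr hz)
      | sub x u =>
          have htail : WF P (add (subst x u b₁) (subst x u b₂)) l := by
            have h2 := h.2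
            rw [show subst x u (add b₁ b₂) = add (subst x u b₁) (subst x u b₂) from
              subst_add x u b₁ b₂] at h2
            exact h2
          obtain ⟨ih1, ih2⟩ := ih _ _ htail
          constructor
          · refine ⟨?_, ih1⟩
            intro hy
            exact h.1 (by simp only [fv, Finset.mem_union]; exact Or.inl hy)
          · refine ⟨?_, ih2⟩
            intro hy
            exact h.1 (by simp only [fv, Finset.mem_union]; exact Or.inr hy)

lemma WF_mul (P : MuTerm X → Prop) : ∀ (l : List (Op X)) (b₁ b₂ : MuTerm X),
    WF P (mul b₁ b₂) l → WF P b₁ l ∧ WF P b₂ l := by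
  intro l
  induction l with
  | nil => intro _ _ _; exact ⟨trivial, trivial⟩
  | cons op l ih =>
      intro b₁ b₂ h
      cases op with
      | ren y z =>
          have htail : WF P (mul (rename y z b₁) (rename y z b₂)) l := h.2
          obtain ⟨ih1, ih2⟩ := ih _ _ htail
          constructor
          · refine ⟨?_, ih1⟩
            intro hy hz
            exact h.1 (by simp only [fv, Finset.mem_union]; exact Or.inl hy)
              (by simp only [vars, Finset.mem_union]; exact Or.inl hz)
          · refine ⟨?_, ih2⟩
            intro hy hz
            exact h.1 (by simp only [fv, Finset.mem_union]; exact Or.inr hy)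
              (by simp only [vars, Finset.mem_union]; exact Or.inr hz)
      | sub x u =>
          have htail : WF P (mul (subst x u b₁) (subst x u b₂)) l := by
            have h2 := h.2
            rw [show subst x u (mul b₁ b₂) = mul (subst x u b₁) (subst x u b₂) from
              subst_mul x u b₁ b₂] at h2
            exact h2
          obtain ⟨ih1, ih2⟩ := ih _ _ htail
          constructor
          · refine ⟨?_, ih1⟩
            intro hy
            exact h.1 (by simp only [fv, Finset.mem_union]; exact Or.inl hy)
          · refine ⟨?_, ih2⟩
            intro hy
            exact h.1 (by simp only [fv, Finset.mem_union]; exact Or.inr hy)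

lemma envD_congr (P : MuTerm X → Prop) : ∀ (l : List (Op X)) (b : MuTerm X)
    (σ₁ σ₂ : X → Language Y), WF P b l →
    (∀ v ∈ fv (applyL l b), σ₁ v = σ₂ v) →
    ∀ v ∈ fv b, envD σ₁ l v = envD σ₂ l v := by
  intro l
  induction l with
  | nil => intro b σ₁ σ₂ _ hagree v hv; exact hagree v hv
  | cons op l ih =>
      intro b σ₁ σ₂ hwf hagree v hv
      cases op with
      | ren y z =>
          have ihl := ih (rename y z b) σ₁ σ₂ hwf.2 hagree
          by_cases hvy : v = y
          · subst hvy
            rw [envD_ren, envD_ren, Function.update_self, Function.update_self]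
            have hz : z ∉ vars b := hwf.1 hv
            have hzz : z ∈ fv (rename v z b) := by
              rw [fv_rename v z b hz, if_pos hv]; simp
            exact ihl z hzz
          · rw [envD_ren, envD_ren, Function.update_of_ne hvy, Function.update_of_ne hvy]
            apply ihl
            apply fv_rename_lower y z b
            simp only [Finset.mem_sdiff, Finset.mem_singleton]
            exact ⟨hv, hvy⟩
      | sub x u =>
          have ihl := ih (subst x u b) σ₁ σ₂ hwf.2 hagree
          by_cases hvx : v = x
          · subst hvx
            rw [envD_sub, envD_sub, Function.update_self, Function.update_self]
            apply deval_congr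
            intro w hw
            exact ihl w (fv_u_subset_fv_subst u hv hw)
          · rw [envD_sub, envD_sub, Function.update_of_ne hvx, Function.update_of_ne hvx]
            apply ihl
            apply fv_subst_lower x u b
            simp only [Finset.mem_sdiff, Finset.mem_singleton]
            exact ⟨hv, hvx⟩

lemma munorm (P : MuTerm X → Prop) : ∀ (l : List (Op X)) (y : X) (b : MuTerm X),
    WF P (mu y b) l →
    ∃ (z' : X) (l' : List (Op X)),
      applyL l (mu y b) = mu z' (applyL l' b) ∧
      (∀ (A : MuTerm X) (vv : List (Op X)), P A →
         DeadFor vv (fv (subst z' A (applyL l' b))) →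
         WF P b (l' ++ Op.sub z' A :: vv)) ∧
      (∀ S : Finset X, DeadFor l S → S ⊆ fv (mu y b) → DeadFor l' S ∧ z' ∉ S) := by
  intro l
  induction l with
  | nil =>
      intro y b _
      refine ⟨y, [], rfl, ?_, ?_⟩
      · intro A vv hPA hdead
        show WF P b (Op.sub y A :: vv)
        refine ⟨?_, ?_⟩
        · intro hyb
          exact ⟨hPA, hdead.mono (fv_u_subset_fv_subst A hyb)⟩
        · exact WF_deadtail P vv _ hdead
      · intro S _ hS
        refine ⟨fun o ho => absurd ho List.not_mem_nil, fun hyS => ?_⟩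
        have := hS hyS
        simp [fv, Finset.mem_sdiff] at this
  | cons op l ih =>
      intro y b hwf
      cases op with
      | ren y₀ z₀ =>
          by_cases h : y = y₀
          · subst h
            have heq : rename y z₀ (mu y b) = mu y b := by rw [rename, if_pos rfl]
            have hwf2 : WF P (mu y b) l := by
              have h2 := hwf.2; rwa [heq] at h2
            obtain ⟨z', l', h1, h2, h3⟩ := ih y b hwf2
            refine ⟨z', l', ?_, h2, fun S hd hS => h3 S hd.tail hS⟩
            rw [applyL_cons]
            show applyL l (rename y z₀ (mu y b)) = _
            rw [heq, h1]
          · have heq : rename y₀ z₀ (mu y b) = mu y (rename y₀ z₀ b) := by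
              rw [rename, if_neg h]
            have hwf2 : WF P (mu y (rename y₀ z₀ b)) l := by
              have h2 := hwf.2; rwa [heq] at h2
            obtain ⟨z', l', h1, h2, h3⟩ := ih y (rename y₀ z₀ b) hwf2
            refine ⟨z', Op.ren y₀ z₀ :: l', ?_, ?_, ?_⟩
            · rw [applyL_cons]
              show applyL l (rename y₀ z₀ (mu y b)) = _
              rw [heq, h1]
              rfl
            · intro A vv hPA hdead
              show WF P b (Op.ren y₀ z₀ :: (l' ++ Op.sub z' A :: vv))
              refine ⟨?_, ?_⟩
              · intro hy₀ hz₀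
                refine hwf.1 ?_ ?_
                · simp only [fv, Finset.mem_sdiff, Finset.mem_singleton]
                  exact ⟨hy₀, fun hh => h hh.symm⟩
                · simp only [vars, Finset.mem_insert]
                  exact Or.inr hz₀
              · exact h2 A vv hPA hdead
            · intro S hd hS
              have hy₀S : y₀ ∉ S := hd.head
              have hS' : S ⊆ fv (mu y (rename y₀ z₀ b)) := by
                intro v hv
                have hvb := hS hv
                simp only [fv, Finset.mem_sdiff, Finset.mem_singleton] at hvb ⊢
                refine ⟨fv_rename_lower y₀ z₀ b ?_, hvb.2⟩
                simp only [Finset.mem_sdiff, Finset.mem_singleton]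
                exact ⟨hvb.1, fun hh => hy₀S (hh ▸ hv)⟩
              obtain ⟨hd', hz'⟩ := h3 S hd.tail hS'
              exact ⟨DeadFor.cons hy₀S hd', hz'⟩
      | sub x₀ u₀ =>
          by_cases h : y = x₀
          · subst h
            have heq : subst y u₀ (mu y b) = mu y b := subst_mu_eq y u₀ b
            have hwf2 : WF P (mu y b) l := by
              have h2 := hwf.2; rwa [heq] at h2
            obtain ⟨z', l', h1, h2, h3⟩ := ih y b hwf2
            refine ⟨z', l', ?_, h2, fun S hd hS => h3 S hd.tail hS⟩
            rw [applyL_cons]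
            show applyL l (subst y u₀ (mu y b)) = _
            rw [heq, h1]
          · have hyx : y ≠ x₀ := h
            have hfz := fresh_spec x₀ u₀ b
            set z₁ := Classical.choose (Infinite.exists_notMem_finset
              (vars b ∪ fv u₀ ∪ {x₀})) with hzdef
            have heq : subst x₀ u₀ (mu y b) = mu z₁ (subst x₀ u₀ (rename y z₁ b)) := by
              rw [subst_mu_ne x₀ u₀ y b hyx, ← hzdef]
            clear_value z₁
            simp only [Finset.mem_union, Finset.mem_singleton, not_or] at hfz
            obtain ⟨⟨hz₁b, hz₁u⟩, hz₁x⟩ := hfz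
            clear hzdef
            have hz₁fb : z₁ ∉ fv b := fun hh => hz₁b (fv_subset_vars b hh)
            have hz₁fu : z₁ ∉ fv u₀ := hz₁u
            set b₁ := subst x₀ u₀ (rename y z₁ b) with hb₁def
            have hwf2 : WF P (mu z₁ b₁) l := by
              have h2 := hwf.2; rwa [heq] at h2
            obtain ⟨z', l', h1, h2, h3⟩ := ih z₁ b₁ hwf2
            refine ⟨z', Op.ren y z₁ :: Op.sub x₀ u₀ :: l', ?_, ?_, ?_⟩
            · rw [applyL_cons]
              show applyL l (subst x₀ u₀ (mu y b)) = _
              rw [heq, h1]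
              rfl
            · intro A vv hPA hdead
              show WF P b (Op.ren y z₁ :: (Op.sub x₀ u₀ :: (l' ++ Op.sub z' A :: vv)))
              refine ⟨fun _ => hz₁b, ?_, ?_⟩
              · -- live condition for sub x₀ u₀ at base rename y z₁ b
                intro hx₀live
                have hx₀b : x₀ ∈ fv b :=
                  (mem_fv_rename_iff hz₁b (fun hh => h hh.symm)
                    (fun hh => hz₁x hh.symm)).mp hx₀live
                have hx₀mu : x₀ ∈ fv (mu y b) := by
                  simp only [fv, Finset.mem_sdiff, Finset.mem_singleton]
                  exact ⟨hx₀b, fun hh => h hh.symm⟩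
                obtain ⟨hPu₀, hdl⟩ := hwf.1 hx₀mu
                refine ⟨hPu₀, ?_⟩
                -- DeadFor (l' ++ sub z' A :: vv) (fv u₀)
                have hu₀b₁ : fv u₀ ⊆ fv b₁ := by
                  rw [hb₁def]; exact fv_u_subset_fv_subst u₀ hx₀live
                have hu₀mu : fv u₀ ⊆ fv (mu z₁ b₁) := by
                  intro w hw
                  simp only [fv, Finset.mem_sdiff, Finset.mem_singleton]
                  exact ⟨hu₀b₁ hw, fun hh => hz₁fu (hh ▸ hw)⟩
                obtain ⟨hdl', hz'u₀⟩ := h3 (fv u₀) hdl hu₀mu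
                refine DeadFor.append hdl' (DeadFor.cons hz'u₀ ?_)
                -- DeadFor vv (fv u₀)
                apply hdead.mono
                have hWu₀ : fv u₀ ⊆ fv (applyL l' b₁) := fv_persist l' b₁ hu₀b₁ hdl'
                intro w hw
                apply fv_subst_lower z' A (applyL l' b₁)
                simp only [Finset.mem_sdiff, Finset.mem_singleton]
                exact ⟨hWu₀ hw, fun hh => hz'u₀ (hh ▸ hw)⟩
              · exact h2 A vv hPA hdead
            · intro S hd hS
              have hx₀S : x₀ ∉ S := hd.head
              have hyS : y ∉ S := by
                intro hyS
                have := hS hyS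
                simp [fv, Finset.mem_sdiff] at this
              have hz₁S : z₁ ∉ S := by
                intro hmem
                have := hS hmem
                simp only [fv, Finset.mem_sdiff, Finset.mem_singleton] at this
                exact hz₁b (fv_subset_vars b this.1)
              have hS' : S ⊆ fv (mu z₁ b₁) := by
                intro v hv
                have hvb := hS hv
                simp only [fv, Finset.mem_sdiff, Finset.mem_singleton] at hvb ⊢
                refine ⟨?_, fun hh => hz₁S (hh ▸ hv)⟩
                rw [hb₁def]
                apply fv_subst_lower x₀ u₀ (rename y z₁ b)
                simp only [Finset.mem_sdiff, Finset.mem_singleton]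
                refine ⟨fv_rename_lower y z₁ b ?_, fun hh => hx₀S (hh ▸ hv)⟩
                simp only [Finset.mem_sdiff, Finset.mem_singleton]
                exact ⟨hvb.1, hvb.2⟩
              obtain ⟨hd', hz'⟩ := h3 S hd.tail hS'
              exact ⟨DeadFor.cons hyS (DeadFor.cons hx₀S hd'), hz'⟩

def GDp (E : (X → Language Y) → MuTerm X → Language Y) (e : MuTerm X) : Prop :=
  ∀ (vv : List (Op X)) (σ : X → Language Y), DeadFor vv (fv e) →
    E σ (applyL vv e) = deval σ e

lemma keyC_var (E : (X → Language Y) → MuTerm X → Language Y) (hE : IsLangEval E) :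
    ∀ (l : List (Op X)) (v : X) (σ : X → Language Y),
    WF (GDp E) (var v) l → E σ (applyL l (var v)) = envD σ l v := by
  intro l
  induction l with
  | nil => intro v σ _; exact hE.var σ v
  | cons op l ih =>
      intro v σ h
      cases op with
      | ren y z =>
          rw [applyL_cons]
          by_cases hvy : v = y
          · subst hvy
            have heq : app1 (Op.ren v z) (var v) = var z := by
              show rename v z (var v) = var z
              rw [rename, if_pos rfl]
            rw [heq]
            have hwf : WF (GDp E) (var z) l := by
              have h2 := h.2
              rwa [show rename v z (var v) = var z from heq] at h2
            rw [ih z σ hwf, envD_ren, Function.update_self]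
          · have heq : app1 (Op.ren y z) (var v) = var v := by
              show rename y z (var v) = var v
              rw [rename, if_neg hvy]
            rw [heq]
            have hwf : WF (GDp E) (var v) l := by
              have h2 := h.2
              rwa [show rename y z (var v) = var v from heq] at h2
            rw [ih v σ hwf, envD_ren, Function.update_of_ne hvy]
      | sub x u =>
          rw [applyL_cons]
          by_cases hvx : v = x
          · subst hvx
            have heq : app1 (Op.sub v u) (var v) = u := by
              show subst v u (var v) = u
              rw [subst_var, if_pos rfl]
            rw [heq]
            have hlive := h.1 (by simp [fv])
            rw [hlive.1 l σ hlive.2, envD_sub, Function.update_self]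
            apply deval_congr
            intro w hw
            exact (envD_untouched σ l (fun o ho hh => hlive.2 o ho (hh ▸ hw))).symm
          · have heq : app1 (Op.sub x u) (var v) = var v := by
              show subst x u (var v) = var v
              rw [subst_var, if_neg hvx]
            rw [heq]
            have hwf : WF (GDp E) (var v) l := by
              have h2 := h.2
              rwa [show subst x u (var v) = var v from heq] at h2
            rw [ih v σ hwf, envD_sub, Function.update_of_ne hvx]

theorem keyC (E : (X → Language Y) → MuTerm X → Language Y) (hE : IsLangEval E) :
    ∀ (b : MuTerm X) (l : List (Op X)) (σ : X → Language Y),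
    WF (GDp E) b l → E σ (applyL l b) = deval (envD σ l) b
  | var v => fun l σ h => by
      rw [keyC_var E hE l v σ h]; rfl
  | zero => fun l σ h => by
      rw [applyL_zero, hE.zero, deval_zero]
  | one => fun l σ h => by
      rw [applyL_one, hE.one, deval_one]
  | add s t => fun l σ h => by
      rw [applyL_add, hE.add]
      obtain ⟨h1, h2⟩ := WF_add _ l s t h
      rw [keyC E hE s l σ h1, keyC E hE t l σ h2, deval_add]
  | mul s t => fun l σ h => by
      rw [applyL_mul, hE.mul]
      obtain ⟨h1, h2⟩ := WF_mul _ l s t h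
      rw [keyC E hE s l σ h1, keyC E hE t l σ h2, deval_mul]
  | mu y b₀ => fun l σ h => by
      obtain ⟨z', l', hM1, hM2, _⟩ := munorm (GDp E) l y b₀ h
      rw [hM1]
      have hGDP : ∀ n, GDp E (napprox n z' (applyL l' b₀)) := by
        intro n
        induction n with
        | zero =>
            intro vv σ' _
            show E σ' (applyL vv zero) = deval σ' zero
            rw [applyL_zero, hE.zero, deval_zero]
        | succ n ihn =>
            intro vv σ' hdead
            have hterm : napprox (n+1) z' (applyL l' b₀)
                = applyL (l' ++ [Op.sub z' (napprox n z' (applyL l' b₀))]) b₀ := by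
              show subst z' (napprox n z' (applyL l' b₀)) (applyL l' b₀) = _
              rw [applyL_append]
              rfl
            have hdead' : DeadFor vv
                (fv (subst z' (napprox n z' (applyL l' b₀)) (applyL l' b₀))) := hdead
            have hwf : WF (GDp E) b₀
                (l' ++ Op.sub z' (napprox n z' (applyL l' b₀)) :: vv) :=
              hM2 _ _ ihn hdead'
            have hwf0 : WF (GDp E) b₀
                (l' ++ [Op.sub z' (napprox n z' (applyL l' b₀))]) :=
              hM2 _ [] ihn (fun o ho => absurd ho List.not_mem_nil)
            have hstep : applyL vv (napprox (n+1) z' (applyL l' b₀))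
                = applyL (l' ++ Op.sub z' (napprox n z' (applyL l' b₀)) :: vv) b₀ := by
              rw [hterm, ← applyL_append]
              congr 1
              simp
            rw [hstep, keyC E hE b₀ _ σ' hwf]
            have htarget : deval σ' (napprox (n+1) z' (applyL l' b₀))
                = deval (envD σ' (l' ++ [Op.sub z' (napprox n z' (applyL l' b₀))])) b₀ := by
              rw [hterm]
              exact deval_applyL _ _ _ _ hwf0
            rw [htarget]
            apply deval_congr
            intro v hv
            rw [envD_append, envD_append]
            apply envD_congr (GDp E) l' b₀ _ _ (WF_prefix _ l' _ b₀ hwf0) _ v hv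
            -- agreement on fv (applyL l' b₀)
            intro w hw
            have hwz : w ∈ fv (subst z' (napprox n z' (applyL l' b₀)) (applyL l' b₀))
                ∨ w = z' := by
              by_cases hwzeq : w = z'
              · exact Or.inr hwzeq
              · refine Or.inl (fv_subst_lower _ _ _ ?_)
                simp only [Finset.mem_sdiff, Finset.mem_singleton]
                exact ⟨hw, hwzeq⟩
            by_cases hwzeq : w = z'
            · rw [hwzeq, envD_sub, envD_sub, envD_nil, Function.update_self,
                Function.update_self]
              apply deval_congr
              intro a ha
              have haz : a ∈ fv (subst z' (napprox n z' (applyL l' b₀)) (applyL l' b₀)) := by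
                apply fv_subst_lower
                have := fv_napprox z' (applyL l' b₀) n ha
                simp only [Finset.mem_sdiff, Finset.mem_singleton] at this ⊢
                exact this
              exact envD_untouched σ' vv (fun o ho hh => hdead' o ho (hh ▸ haz))
            · rcases hwz with hwz | hwz
              · rw [envD_sub, envD_sub, envD_nil, Function.update_of_ne hwzeq,
                  Function.update_of_ne hwzeq]
                exact envD_untouched σ' vv (fun o ho hh => hdead' o ho (hh ▸ hwz))
              · exact absurd hwz hwzeq
      rw [hE.mu σ z' (applyL l' b₀)]
      have hpt : ∀ n, E σ (napprox n z' (applyL l' b₀))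
          = deval σ (napprox n z' (applyL l' b₀)) := fun n =>
        hGDP n [] σ (fun o ho => absurd ho List.not_mem_nil)
      calc (⨆ n, E σ (napprox n z' (applyL l' b₀)))
          = ⨆ n, deval σ (napprox n z' (applyL l' b₀)) := iSup_congr hpt
        _ = deval σ (mu z' (applyL l' b₀)) := (deval_mu_napprox σ z' (applyL l' b₀)).symm
        _ = deval σ (applyL l (mu y b₀)) := by rw [hM1]
        _ = deval (envD σ l) (mu y b₀) := deval_applyL _ l _ σ h
  termination_by b => size b
  decreasing_by
    all_goals simp only [size]
    all_goals omega

end S3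

theorem statement3' {X Y : Type} [DecidableEq X] [Infinite X]
    (E : (X → Language Y) → MuTerm X → Language Y) (hE : IsLangEval E)
    (σ : X → Language Y) (t : MuTerm X) (x : X) :
    E (Function.update σ x (E σ (.mu x t))) t = E σ (.mu x t) ∧
    ∀ A : Language Y, E (Function.update σ x A) t ≤ A → E σ (.mu x t) ≤ A := by
  open S3 MuTerm in
  have hGD : ∀ (s : MuTerm X) (ρ : X → Language Y), E ρ s = S3.deval ρ s := fun s ρ =>
    S3.keyC E hE s [] ρ trivial
  open S3 MuTerm in
  have hGDP : ∀ n, S3.GDp E (MuTerm.napprox n x t) := by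
    intro n; induction n with
    | zero =>
        intro vv σ' _
        show E σ' (S3.applyL vv MuTerm.zero) = S3.deval σ' MuTerm.zero
        rw [S3.applyL_zero, hE.zero, S3.deval_zero]
    | succ n ihn =>
        intro vv σ' hdead
        have hdead' : S3.DeadFor vv (MuTerm.fv (MuTerm.subst x (napprox n x t) t)) := hdead
        have hwf : S3.WF (S3.GDp E) t (S3.Op.sub x (MuTerm.napprox n x t) :: vv) := by
          refine ⟨?_, ?_⟩
          · intro hxt
            refine ⟨ihn, ?_⟩
            apply hdead'.mono
            intro w hw
            exact fv_subst_lower x (napprox n x t) t (fv_napprox x t n hw)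
          · exact S3.WF_deadtail _ vv _ hdead'
        have hstep : S3.applyL vv (MuTerm.napprox (n+1) x t)
            = S3.applyL (S3.Op.sub x (MuTerm.napprox n x t) :: vv) t := rfl
        rw [hstep, S3.keyC E hE t _ σ' hwf]
        have htarget : S3.deval σ' (MuTerm.napprox (n+1) x t)
            = S3.deval (Function.update σ' x (S3.deval σ' (MuTerm.napprox n x t))) t :=
          S3.deval_subst t x _ σ'
        rw [htarget]
        apply S3.deval_congr
        intro v hv
        rw [S3.envD_sub]
        by_cases hvx : v = x
        · rw [hvx, Function.update_self, Function.update_self]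
          apply S3.deval_congr
          intro a ha
          have haz : a ∈ fv (subst x (napprox n x t) t) :=
            fv_subst_lower _ _ _ (fv_napprox x t n ha)
          exact S3.envD_untouched σ' vv (fun o ho hh => hdead' o ho (hh ▸ haz))
        · rw [Function.update_of_ne hvx, Function.update_of_ne hvx]
          have hvz : v ∈ fv (subst x (napprox n x t) t) := by
            apply fv_subst_lower
            simp only [Finset.mem_sdiff, Finset.mem_singleton]
            exact ⟨hv, hvx⟩
          exact S3.envD_untouched σ' vv (fun o ho hh => hdead' o ho (hh ▸ hvz))
  open S3 MuTerm in
  let F : Language Y → Language Y := fun A => S3.deval (Function.update σ x A) t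
  have hFn : ∀ n, S3.deval σ (MuTerm.napprox n x t) = F^[n] ⊥ := S3.deval_napprox x t σ
  have hM : E σ (.mu x t) = ⨆ n, F^[n] ⊥ := by
    rw [hE.mu]
    apply iSup_congr
    intro n
    have h0 := hGDP n [] σ (fun o ho => absurd ho List.not_mem_nil)
    rw [S3.applyL_nil] at h0
    rw [h0, hFn n]
  have hFmono : ∀ A B, A ≤ B → F A ≤ F B := by
    intro A B hAB
    apply S3.deval_mono
    intro v
    by_cases hvx : v = x
    · subst hvx; simpa using hAB
    · rw [Function.update_of_ne hvx, Function.update_of_ne hvx]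
  have hchain : ∀ n, F^[n] ⊥ ≤ F^[n+1] ⊥ := by
    intro n; induction n with
    | zero => exact bot_le
    | succ n ihn =>
        rw [Function.iterate_succ_apply', Function.iterate_succ_apply']
        exact hFmono _ _ ihn
  have hchain' : Monotone (fun n => F^[n] ⊥) := monotone_nat_of_le_succ hchain
  constructor
  · rw [hGD t (Function.update σ x (E σ (.mu x t))), hM]
    have henv : Function.update σ x (⨆ n, F^[n] ⊥)
        = fun v => ⨆ n, Function.update σ x (F^[n] ⊥) v := by
      funext v
      by_cases hvx : v = x
      · subst hvx; simp
      · simp only [Function.update_of_ne hvx]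
        exact (iSup_const).symm
    rw [henv, S3.deval_iSup_chain t _ (fun i j hij v => by
      by_cases hvx : v = x
      · subst hvx; simp only [Function.update_self]; exact hchain' hij
      · simp only [Function.update_of_ne hvx]; exact le_rfl)]
    apply le_antisymm
    · apply iSup_le; intro n
      show F (F^[n] ⊥) ≤ _
      calc F (F^[n] ⊥) = F^[n+1] ⊥ := (Function.iterate_succ_apply' F n ⊥).symm
        _ ≤ ⨆ m, F^[m] ⊥ := le_iSup (fun m => F^[m] ⊥) (n+1)
    · apply iSup_le; intro n
      calc F^[n] ⊥ ≤ F^[n+1] ⊥ := hchain n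
        _ = F (F^[n] ⊥) := Function.iterate_succ_apply' F n ⊥
        _ ≤ ⨆ m, S3.deval (Function.update σ x (F^[m] ⊥)) t :=
            le_iSup (fun m => S3.deval (Function.update σ x (F^[m] ⊥)) t) n
  · intro A hA
    rw [hGD t (Function.update σ x A)] at hA
    rw [hM]
    apply iSup_le
    intro n
    induction n with
    | zero => exact bot_le
    | succ n ihn =>
        rw [Function.iterate_succ_apply']
        calc F (F^[n] ⊥) ≤ F A := hFmono _ _ ihn
          _ ≤ A := hA

/-- For the structurally induced language interpretation,
`σ̂(μx.t)` is the least language `A` with `σ̂[x↦A](t) ⊆ A`. -/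
theorem statement3 {X Y : Type} [DecidableEq X] [Infinite X]
    (E : (X → Language Y) → MuTerm X → Language Y) (hE : IsLangEval E)
    (σ : X → Language Y) (t : MuTerm X) (x : X) :
    E (Function.update σ x (E σ (.mu x t))) t = E σ (.mu x t) ∧
    ∀ A : Language Y, E (Function.update σ x A) t ≤ A → E σ (.mu x t) ≤ A :=
  statement3' E hE σ t x
end

section
/- In every μ-continuous Chomsky algebra the equation μx.(1 + a·x) = μx.(1 + x·a) holds, provided x is not free in a: for every interpretation σ over a μ-continuous Chomsky algebra C and all terms a, t with x ∉ FV(a), σ(μx.(1 + a·x)) = σ(μx.(1 + x·a)). -/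
section Aux

variable {X C : Type} [DecidableEq X] [Infinite X] [ChomskyAlgebra C]
variable {eval : (X → C) → MuTerm X → C}

theorem MuTerm.fv_subset_vars_s11 : ∀ t : MuTerm X, t.fv ⊆ t.vars
  | .var x => by simp [MuTerm.fv, MuTerm.vars]
  | .zero => by simp [MuTerm.fv, MuTerm.vars]
  | .one => by simp [MuTerm.fv, MuTerm.vars]
  | .add s t => by
      simp only [MuTerm.fv, MuTerm.vars]
      exact Finset.union_subset_union (MuTerm.fv_subset_vars_s11 s) (MuTerm.fv_subset_vars_s11 t)
  | .mul s t => by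
      simp only [MuTerm.fv, MuTerm.vars]
      exact Finset.union_subset_union (MuTerm.fv_subset_vars_s11 s) (MuTerm.fv_subset_vars_s11 t)
  | .mu x t => by
      simp only [MuTerm.fv, MuTerm.vars]
      exact (Finset.sdiff_subset).trans ((MuTerm.fv_subset_vars_s11 t).trans (Finset.subset_insert _ _))

theorem eval_congr (h : IsInterp eval) :
    ∀ (t : MuTerm X) (v v' : X → C), (∀ y ∈ t.fv, v y = v' y) → eval v t = eval v' t
  | .var x, v, v', hv => by
      rw [h.var, h.var]; exact hv x (by simp [MuTerm.fv])
  | .zero, v, v', _ => by rw [h.zero, h.zero]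
  | .one, v, v', _ => by rw [h.one, h.one]
  | .add s t, v, v', hv => by
      rw [h.add, h.add,
        eval_congr h s v v' (fun y hy => hv y (by simp [MuTerm.fv, hy])),
        eval_congr h t v v' (fun y hy => hv y (by simp [MuTerm.fv, hy]))]
  | .mul s t, v, v', hv => by
      rw [h.mul, h.mul,
        eval_congr h s v v' (fun y hy => hv y (by simp [MuTerm.fv, hy])),
        eval_congr h t v v' (fun y hy => hv y (by simp [MuTerm.fv, hy]))]
  | .mu x t, v, v', hv => by
      have hset : {a : C | eval (Function.update v x a) t ≤ a}
          = {a : C | eval (Function.update v' x a) t ≤ a} := by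
        ext a
        have : eval (Function.update v x a) t = eval (Function.update v' x a) t := by
          refine eval_congr h t _ _ (fun y hy => ?_)
          by_cases hyx : y = x
          · subst hyx; simp
          · simp only [Function.update_of_ne hyx]
            exact hv y (by simp [MuTerm.fv, hy, hyx])
        simp [Set.mem_setOf_eq, this]
      exact (h.mu v x t).unique (hset ▸ h.mu v' x t)

theorem eval_rename (h : IsInterp eval) (y z : X) :
    ∀ (t : MuTerm X), z ∉ t.vars → ∀ v : X → C,
      eval v (t.rename y z) = eval (Function.update v y (v z)) t
  | .var w, _, v => by
      simp only [MuTerm.rename]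
      split
      · next hw => subst hw; rw [h.var, h.var]; simp
      · next hw => rw [h.var, h.var]; simp [Function.update_of_ne hw]
  | .zero, _, v => by simp only [MuTerm.rename]; rw [h.zero, h.zero]
  | .one, _, v => by simp only [MuTerm.rename]; rw [h.one, h.one]
  | .add s t, hz, v => by
      simp only [MuTerm.vars, Finset.mem_union, not_or] at hz
      simp only [MuTerm.rename]
      rw [h.add, h.add, eval_rename h y z s hz.1 v, eval_rename h y z t hz.2 v]
  | .mul s t, hz, v => by
      simp only [MuTerm.vars, Finset.mem_union, not_or] at hz
      simp only [MuTerm.rename]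
      rw [h.mul, h.mul, eval_rename h y z s hz.1 v, eval_rename h y z t hz.2 v]
  | .mu w t, hz, v => by
      simp only [MuTerm.vars, Finset.mem_insert, not_or] at hz
      obtain ⟨hzw, hzt⟩ := hz
      simp only [MuTerm.rename]
      split
      · next hw =>
          subst hw
          refine eval_congr h _ _ _ (fun p hp => ?_)
          simp only [MuTerm.fv, Finset.mem_sdiff, Finset.mem_singleton] at hp
          rw [Function.update_of_ne hp.2]
      · next hw =>
          have hset : {a : C | eval (Function.update v w a) (t.rename y z) ≤ a}
              = {a : C | eval (Function.update (Function.update v y (v z)) w a) t ≤ a} := by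
            ext a
            simp only [Set.mem_setOf_eq]
            rw [eval_rename h y z t hzt (Function.update v w a)]
            have h1 : (Function.update v w a) z = v z :=
              Function.update_of_ne hzw _ _
            rw [h1, Function.update_comm hw]
          exact (h.mu v w (t.rename y z)).unique (hset ▸ h.mu (Function.update v y (v z)) w t)

theorem eval_subst (h : IsInterp eval) (x : X) (u : MuTerm X) :
    ∀ (t : MuTerm X) (v : X → C),
      eval v (MuTerm.subst x u t) = eval (Function.update v x (eval v u)) t := by
  suffices H : ∀ (n : ℕ) (t : MuTerm X), t.size ≤ n → ∀ v : X → C,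
      eval v (MuTerm.subst x u t) = eval (Function.update v x (eval v u)) t by
    exact fun t v => H t.size t le_rfl v
  intro n
  induction n with
  | zero =>
      intro t hsz
      exfalso
      cases t <;> simp [MuTerm.size] at hsz
  | succ n ih =>
      intro t hsz v
      cases t with
      | var w =>
          rw [MuTerm.subst]
          split
          · next hw => subst hw; rw [h.var]; simp
          · next hw => rw [h.var, h.var, Function.update_of_ne hw]
      | zero => rw [MuTerm.subst, h.zero, h.zero]
      | one => rw [MuTerm.subst, h.one, h.one]
      | add s t =>
          simp only [MuTerm.size] at hsz
          rw [MuTerm.subst, h.add, h.add, ih s (by omega) v, ih t (by omega) v]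
      | mul s t =>
          simp only [MuTerm.size] at hsz
          rw [MuTerm.subst, h.mul, h.mul, ih s (by omega) v, ih t (by omega) v]
      | mu y t =>
          simp only [MuTerm.size] at hsz
          rw [MuTerm.subst]
          split
          · next hy =>
              subst hy
              have hset : {a : C | eval (Function.update v y a) t ≤ a}
                  = {a : C | eval (Function.update (Function.update v y (eval v u)) y a) t ≤ a} := by
                ext a
                simp only [Set.mem_setOf_eq, Function.update_idem]
              exact (h.mu v y t).unique (hset ▸ h.mu (Function.update v y (eval v u)) y t)
          · next hy =>
              set z : X := Classical.choose
                (Infinite.exists_notMem_finset (t.vars ∪ u.fv ∪ {x})) with hzdef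
              have hz := Classical.choose_spec
                (Infinite.exists_notMem_finset (t.vars ∪ u.fv ∪ {x}))
              rw [← hzdef] at hz
              simp only [Finset.mem_union, Finset.mem_singleton, not_or] at hz
              obtain ⟨⟨hzt, hzu⟩, hzx⟩ := hz
              have hset : {a : C | eval (Function.update v z a)
                    (MuTerm.subst x u (t.rename y z)) ≤ a}
                  = {a : C | eval (Function.update (Function.update v x (eval v u)) y a) t ≤ a} := by
                ext a
                simp only [Set.mem_setOf_eq]
                have e1 : eval (Function.update v z a) (MuTerm.subst x u (t.rename y z))
                    = eval (Function.update (Function.update v z a) x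
                        (eval (Function.update v z a) u)) (t.rename y z) :=
                  ih (t.rename y z) (by rw [MuTerm.size_rename]; omega) _
                have e2 : eval (Function.update v z a) u = eval v u :=
                  eval_congr h u _ _ (fun p hp =>
                    Function.update_of_ne (fun hc => hzu (by rw [← hc]; exact hp)) _ _)
                rw [e1, e2, eval_rename h y z t hzt]
                have e3 : (Function.update (Function.update v z a) x (eval v u)) z = a := by
                  rw [Function.update_of_ne (fun hc => hzx hc), Function.update_self]
                rw [e3]
                have e4 : eval (Function.update
                      (Function.update (Function.update v z a) x (eval v u)) y a) t
                    = eval (Function.update (Function.update v x (eval v u)) y a) t := by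
                  refine eval_congr h t _ _ (fun p hp => ?_)
                  have hpz : p ≠ z := fun hc => hzt (hc ▸ MuTerm.fv_subset_vars_s11 t hp)
                  by_cases hpy : p = y
                  · subst hpy; simp
                  · rw [Function.update_of_ne hpy, Function.update_of_ne hpy]
                    by_cases hpx : p = x
                    · subst hpx; simp
                    · rw [Function.update_of_ne hpx, Function.update_of_ne hpx,
                        Function.update_of_ne hpz]
                rw [e4]
              exact (h.mu v z _).unique
                (hset ▸ h.mu (Function.update v x (eval v u)) y t)

theorem napprox_eq (h : IsInterp eval) (v : X → C) (a : MuTerm X) (x : X)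
    (hx : x ∉ MuTerm.fv a) : ∀ n : ℕ,
      eval v (MuTerm.napprox n x (.add .one (.mul a (.var x))))
        = eval v (MuTerm.napprox n x (.add .one (.mul (.var x) a)))
      ∧ eval v (MuTerm.napprox n x (.add .one (.mul a (.var x)))) * eval v a
        = eval v a * eval v (MuTerm.napprox n x (.add .one (.mul a (.var x)))) := by
  intro n
  set t1 : MuTerm X := .add .one (.mul a (.var x)) with ht1
  set t2 : MuTerm X := .add .one (.mul (.var x) a) with ht2
  induction n with
  | zero =>
      constructor
      · rfl
      · simp only [MuTerm.napprox, h.zero, zero_mul, mul_zero]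
  | succ n ihn =>
      obtain ⟨ih1, ih2⟩ := ihn
      set A := eval v a with hA
      set P := eval v (MuTerm.napprox n x t1) with hP
      have heva : ∀ c : C, eval (Function.update v x c) a = A := fun c =>
        eval_congr h a _ _ (fun p hp =>
          Function.update_of_ne (fun hc => hx (by rw [← hc]; exact hp)) _ _)
      have e1 : eval v (MuTerm.napprox (n + 1) x t1) = 1 + A * P := by
        show eval v (MuTerm.subst x (MuTerm.napprox n x t1) t1) = _
        rw [eval_subst h, ht1, h.add, h.one, h.mul, h.var, Function.update_self, heva, ← hP]
      have e2 : eval v (MuTerm.napprox (n + 1) x t2) = 1 + P * A := by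
        show eval v (MuTerm.subst x (MuTerm.napprox n x t2) t2) = _
        rw [eval_subst h, ht2, h.add, h.one, h.mul, h.var, Function.update_self, heva, ← ih1]
      constructor
      · rw [e1, e2, ih2]
      · rw [e1, add_mul, one_mul, mul_add, mul_one, mul_assoc, ← ih2, ← mul_assoc]

end Aux

/-- `μx.(1 + a·x) = μx.(1 + x·a)` holds in all μ-continuous
Chomsky algebras, provided `x` is not free in `a`. -/
theorem statement11 {X C : Type} [DecidableEq X] [Infinite X] [ChomskyAlgebra C]
    (hC : MuContinuous C) (eval : (X → C) → MuTerm X → C) (h : IsInterp eval)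
    (v : X → C) (a : MuTerm X) (x : X) (hx : x ∉ MuTerm.fv a) :
    eval v (.mu x (.add .one (.mul a (.var x)))) =
      eval v (.mu x (.add .one (.mul (.var x) a))) := by
  have L1 := hC X eval h v 1 1 x (.add .one (.mul a (.var x)))
  have L2 := hC X eval h v 1 1 x (.add .one (.mul (.var x) a))
  simp only [one_mul, mul_one] at L1 L2
  have hfun : (fun n : ℕ => eval v (MuTerm.napprox n x (.add .one (.mul a (.var x)))))
      = fun n : ℕ => eval v (MuTerm.napprox n x (.add .one (.mul (.var x) a))) :=
    funext fun n => (napprox_eq h v a x hx n).1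
  rw [hfun] at L1
  exact L1.unique L2
end
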